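/- For every α > 0, the standardized call function χ_α is strictly increasing on (0, +∞). -/

import Mathlib

open Real Filter Set MeasureTheory intervalIntegral

noncomputable def stdNormalCDF (x : ℝ) : ℝ :=
  (Real.sqrt (2 * Real.pi))⁻¹ * ∫ t in Set.Iic x, Real.exp (-t ^ 2 / 2)

noncomputable def chi (α x : ℝ) : ℝ :=
  stdNormalCDF (α / 2 * (x - 1 / x)) -
    Real.exp (α ^ 2 / 2) * stdNormalCDF (-(α / 2) * (x + 1 / x))

lemma gauss_cont : Continuous fun t : ℝ => Real.exp (-t ^ 2 / 2) := by
  continuity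

lemma gauss_integrable : Integrable fun t : ℝ => Real.exp (-t ^ 2 / 2) := by
  have h := integrable_exp_neg_mul_sq (show (0:ℝ) < 1/2 by norm_num)
  convert h using 2 with t
  ring_nf

lemma hasDerivAt_stdNormalCDF (x : ℝ) :
    HasDerivAt stdNormalCDF ((Real.sqrt (2 * Real.pi))⁻¹ * Real.exp (-x ^ 2 / 2)) x := by
  have hfun : stdNormalCDF = fun y =>
      (Real.sqrt (2 * Real.pi))⁻¹ * ((∫ t in Set.Iic (0:ℝ), Real.exp (-t ^ 2 / 2)) +
        ∫ t in (0:ℝ)..y, Real.exp (-t ^ 2 / 2)) := by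
    funext y
    rw [stdNormalCDF]
    congr 1
    have := integral_Iic_sub_Iic (gauss_integrable.integrableOn (s := Set.Iic 0))
      (gauss_integrable.integrableOn (s := Set.Iic y))
    linarith
  rw [hfun]
  have h : HasDerivAt (fun y => ∫ t in (0:ℝ)..y, Real.exp (-t ^ 2 / 2))
      (Real.exp (-x ^ 2 / 2)) x :=
    integral_hasDerivAt_right (gauss_cont.intervalIntegrable _ _)
      (gauss_cont.stronglyMeasurableAtFilter _ _) gauss_cont.continuousAt
  simpa [mul_add] using (h.const_add (∫ t in Set.Iic (0:ℝ), Real.exp (-t ^ 2 / 2))).const_mul ((Real.sqrt (2 * Real.pi))⁻¹)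

lemma hasDerivAt_chi {α x : ℝ} (hx : 0 < x) :
    HasDerivAt (chi α)
      (α * ((Real.sqrt (2 * Real.pi))⁻¹ *
        Real.exp (-(α / 2 * (x - 1 / x)) ^ 2 / 2))) x := by
  have hx0 : x ≠ 0 := ne_of_gt hx
  have ha : HasDerivAt (fun y : ℝ => α / 2 * (y - 1 / y))
      (α / 2 * (1 + 1 / x ^ 2)) x := by
    have h1 : HasDerivAt (fun y : ℝ => y - 1 / y) (1 - -(x ^ 2)⁻¹) x := by
      simpa [one_div, Pi.sub_def] using (hasDerivAt_id' x).sub (hasDerivAt_inv hx0)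
    have := h1.const_mul (α / 2)
    convert this using 1
    rfl
    rfl
    field_simp
    ring
  have hb : HasDerivAt (fun y : ℝ => -(α / 2) * (y + 1 / y))
      (-(α / 2) * (1 - 1 / x ^ 2)) x := by
    have h1 : HasDerivAt (fun y : ℝ => y + 1 / y) (1 + -(x ^ 2)⁻¹) x := by
      simpa [one_div, Pi.add_def] using (hasDerivAt_id' x).add (hasDerivAt_inv hx0)
    have := h1.const_mul (-(α / 2))
    convert this using 1
    rfl
    rfl
    rw [one_div]; ring
  have hA := (hasDerivAt_stdNormalCDF (α / 2 * (x - 1 / x))).comp x ha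
  have hB := ((hasDerivAt_stdNormalCDF (-(α / 2) * (x + 1 / x))).comp x hb).const_mul
    (Real.exp (α ^ 2 / 2))
  have h := hA.sub hB
  have key : Real.exp (α ^ 2 / 2) * Real.exp (-(-(α / 2) * (x + 1 / x)) ^ 2 / 2) =
      Real.exp (-(α / 2 * (x - 1 / x)) ^ 2 / 2) := by
    rw [← Real.exp_add]
    congr 1
    field_simp
    ring
  convert h using 1
  rfl
  rfl
  rfl
  simp only [Function.comp] at h ⊢
  have hsum : α / 2 * (1 + 1 / x ^ 2) - -(α / 2) * (1 - 1 / x ^ 2) = α := by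
    field_simp
    ring
  calc α * ((Real.sqrt (2 * Real.pi))⁻¹ * Real.exp (-(α / 2 * (x - 1 / x)) ^ 2 / 2))
      = (Real.sqrt (2 * Real.pi))⁻¹ * Real.exp (-(α / 2 * (x - 1 / x)) ^ 2 / 2) *
        (α / 2 * (1 + 1 / x ^ 2)) -
        (Real.sqrt (2 * Real.pi))⁻¹ *
          (Real.exp (α ^ 2 / 2) * Real.exp (-(-(α / 2) * (x + 1 / x)) ^ 2 / 2)) *
          (-(α / 2) * (1 - 1 / x ^ 2)) := by
        rw [key, ← mul_sub, hsum]; ring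
    _ = _ := by ring

theorem chi_strictMonoOn (α : ℝ) (hα : 0 < α) :
    StrictMonoOn (chi α) (Set.Ioi 0) := by
  have hsqrt : 0 < Real.sqrt (2 * Real.pi) := Real.sqrt_pos.mpr (by positivity)
  apply strictMonoOn_of_deriv_pos (convex_Ioi 0)
  · intro x hx
    exact (hasDerivAt_chi (α := α) hx).continuousAt.continuousWithinAt
  · intro x hx
    rw [interior_Ioi] at hx
    rw [(hasDerivAt_chi (α := α) hx).deriv]
    positivity
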